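/- arXiv:1302.0668 — 6 statements merged into one kernel-verified Lean document; each statement's English description precedes it below -/
import Mathlib

section
/- Let H_n be the n×n lower Hessenberg matrix with superdiagonal entries alternating -1, 1, -1, ... (starting with -1), main diagonal entries all 2 except the (n,n) entry which is 1, subdiagonal entries all 0, second subdiagonal (entries (i+2, i)) all 1, and all other entries 0. Then the permanent of H_n equals F_{n+1}, the (n+1)st Fibonacci number. -/
open Finset Nat

def lucas : ℕ → ℕ
  | 0 => 2
  | 1 => 1
  | n + 2 => lucas (n + 1) + lucas n


def Hmat (n : ℕ) : Matrix (Fin n) (Fin n) ℤ := Matrix.of fun i j =>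
  if (j : ℕ) = (i : ℕ) + 1 then (-1) ^ ((i : ℕ) + 1)
  else if (i : ℕ) = (j : ℕ) then (if (i : ℕ) = n - 1 then 1 else 2)
  else if (i : ℕ) = (j : ℕ) + 2 then 1 else 0

namespace PermH

open Equiv Matrix

theorem permanent_succ_column_zero {n : ℕ} (A : Matrix (Fin n.succ) (Fin n.succ) ℤ) :
    A.permanent = ∑ i : Fin n.succ, A i 0 * (A.submatrix i.succAbove Fin.succ).permanent := by
  rw [Matrix.permanent, Finset.univ_perm_fin_succ, ← Finset.univ_product_univ]
  simp only [Finset.sum_map, Equiv.toEmbedding_apply, Finset.sum_product]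
  refine Finset.sum_congr rfl fun i _ => Fin.cases ?_ (fun i => ?_) i
  · simp only [Fin.prod_univ_succ, Matrix.permanent, Finset.mul_sum,
      Equiv.Perm.decomposeFin_symm_apply_zero, Fin.val_zero, one_mul,
      Equiv.Perm.decomposeFin_symm_apply_succ, Fin.succAbove_zero, id, of_apply,
      Equiv.swap_self, Equiv.coe_refl, Matrix.submatrix_apply]
  · rw [← permanent_permute_cols i.cycleRange ((A.submatrix i.succ.succAbove Fin.succ)),
      Matrix.permanent, Finset.mul_sum]
    refine Finset.sum_congr rfl fun σ _ => ?_
    rw [Fin.prod_univ_succ, Equiv.Perm.decomposeFin_symm_apply_zero]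
    congr 1
    apply Finset.prod_congr rfl fun j _ => ?_
    simp [Equiv.Perm.decomposeFin_symm_apply_succ, Fin.succAbove_cycleRange]

theorem permanent_succ_row_zero {n : ℕ} (A : Matrix (Fin n.succ) (Fin n.succ) ℤ) :
    A.permanent = ∑ j : Fin n.succ, A 0 j * (A.submatrix Fin.succ j.succAbove).permanent := by
  rw [← Matrix.permanent_transpose A, permanent_succ_column_zero]
  refine Finset.sum_congr rfl fun j _ => ?_
  rw [← Matrix.permanent_transpose]
  simp only [Matrix.transpose_apply, Matrix.transpose_submatrix, Matrix.transpose_transpose]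

theorem expand_one_col {m : ℕ} (A : Matrix (Fin (m+1)) (Fin (m+1)) ℤ)
    (h : ∀ i : Fin m, A i.succ 0 = 0) :
    A.permanent = A 0 0 * (A.submatrix Fin.succ Fin.succ).permanent := by
  rw [permanent_succ_column_zero, Fin.sum_univ_succ,
    Finset.sum_eq_zero (fun i _ => by rw [h i, zero_mul]), add_zero, Fin.succAbove_zero]

theorem expand_one_row {m : ℕ} (A : Matrix (Fin (m+1)) (Fin (m+1)) ℤ)
    (h : ∀ j : Fin m, A 0 j.succ = 0) :
    A.permanent = A 0 0 * (A.submatrix Fin.succ Fin.succ).permanent := by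
  rw [permanent_succ_row_zero, Fin.sum_univ_succ,
    Finset.sum_eq_zero (fun j _ => by rw [h j, zero_mul]), add_zero, Fin.succAbove_zero]

theorem expand_two_col {m : ℕ} (A : Matrix (Fin (m+2)) (Fin (m+2)) ℤ)
    (h : ∀ i : Fin m, A i.succ.succ 0 = 0) :
    A.permanent = A 0 0 * (A.submatrix Fin.succ Fin.succ).permanent
      + A 1 0 * (A.submatrix ((1 : Fin (m+2)).succAbove) Fin.succ).permanent := by
  rw [permanent_succ_column_zero, Fin.sum_univ_succ, Fin.sum_univ_succ,
    Finset.sum_eq_zero (fun i _ => by rw [h i, zero_mul]), add_zero, Fin.succAbove_zero,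
    Fin.succ_zero_eq_one]

lemma sa1_zero {m : ℕ} : (1 : Fin (m+2)).succAbove 0 = 0 := by
  rw [Fin.succAbove_of_castSucc_lt] <;> simp

lemma sa1_succ {m : ℕ} (i : Fin m) :
    (1 : Fin (m+2)).succAbove i.succ = i.succ.succ := by
  have h := Fin.succ_succAbove_succ (0 : Fin (m+1)) i
  rw [Fin.succAbove_zero, Fin.succ_zero_eq_one] at h
  exact h

def Dmat (m : ℕ) (e d : ℤ) : Matrix (Fin m) (Fin m) ℤ := Matrix.of fun i j =>
  if (i : ℕ) = (j : ℕ) + 1 then e * (-1) ^ (i : ℕ)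
  else if (i : ℕ) = (j : ℕ) then (if (i : ℕ) = 0 then d else 2)
  else if (j : ℕ) = (i : ℕ) + 2 then 1 else 0

set_option maxHeartbeats 1000000 in
lemma Drec (k : ℕ) (e d : ℤ) (he : e * e = 1) :
    (Dmat (k+3) e d).permanent
      = d * (Dmat (k+2) (-e) 2).permanent - (Dmat k (-e) 2).permanent := by
  have h00 : (Dmat (k+3) e d).submatrix Fin.succ Fin.succ = Dmat (k+2) (-e) 2 := by
    ext i j
    simp only [Dmat, Matrix.submatrix_apply, Matrix.of_apply, Fin.val_succ]
    split_ifs <;> first | rfl | contradiction | omega | (rw [pow_succ]; ring)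
  have hA00 : Dmat (k+3) e d 0 0 = d := by simp [Dmat]
  have hA10 : Dmat (k+3) e d 1 0 = -e := by
    simp only [Dmat, Matrix.of_apply, Fin.val_one, Fin.val_zero]
    norm_num
  have step1 := expand_two_col (m := k+1) (Dmat (k+3) e d) (fun i => by
    simp only [Dmat, Matrix.of_apply, Fin.val_succ, Fin.val_zero]
    split_ifs <;> first | rfl | contradiction | omega)
  set M10 := (Dmat (k+3) e d).submatrix ((1 : Fin (k+3)).succAbove) Fin.succ with hM10
  have hM00' : M10 0 0 = 0 := by
    simp only [hM10, Matrix.submatrix_apply, sa1_zero, Dmat, Matrix.of_apply,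
      Fin.val_zero, Fin.val_succ]
    norm_num
  have hM10' : M10 1 0 = e := by
    rw [hM10, show (1 : Fin (k+2)) = (0 : Fin (k+1)).succ from (Fin.succ_zero_eq_one).symm]
    simp only [Matrix.submatrix_apply, sa1_succ, Dmat, Matrix.of_apply, Fin.val_succ,
      Fin.val_zero]
    norm_num
  have step2 := expand_two_col (m := k) M10 (fun i => by
    rw [hM10]
    simp only [Matrix.submatrix_apply, sa1_succ, Dmat, Matrix.of_apply, Fin.val_succ,
      Fin.val_zero]
    split_ifs <;> first | rfl | contradiction | omega)
  set M2 := M10.submatrix ((1 : Fin (k+2)).succAbove) Fin.succ with hM2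
  have hM2entry : M2 0 0 = 1 := by
    simp only [hM2, hM10, Matrix.submatrix_apply, sa1_zero, Dmat, Matrix.of_apply,
      Fin.val_zero, Fin.val_succ]
    norm_num
  have step3 := expand_one_row (m := k) M2 (fun j => by
    simp only [hM2, hM10, Matrix.submatrix_apply, sa1_zero, Dmat, Matrix.of_apply,
      Fin.val_succ, Fin.val_zero]
    split_ifs <;> first | rfl | contradiction | omega)
  have hM3 : M2.submatrix Fin.succ Fin.succ = Dmat k (-e) 2 := by
    ext i j
    simp only [hM2, hM10, Matrix.submatrix_apply, sa1_succ, Dmat, Matrix.of_apply,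
      Fin.val_succ]
    split_ifs <;>
      first | rfl | contradiction | omega | (rw [pow_succ, pow_succ, pow_succ]; ring)
  rw [step1, hA00, hA10, h00, step2, hM00', hM10', step3, hM2entry, hM3]
  linear_combination (-(Matrix.permanent (Dmat k (-e) 2))) * he

lemma Dval : ∀ (m : ℕ) (e : ℤ), e * e = 1 → (Dmat m e 2).permanent = (Nat.fib (m+3) : ℤ) - 1
  | 0, e, _ => by
      rw [Matrix.permanent_isEmpty]
      decide
  | 1, e, _ => by
      rw [Matrix.permanent_eq_elem_of_card_eq_one (by simp) 0]
      show Dmat 1 e 2 0 0 = _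
      norm_num [Dmat]
  | 2, e, _ => by
      rw [expand_two_col (m := 0) (Dmat 2 e 2) (fun i => i.elim0),
        Matrix.permanent_eq_elem_of_card_eq_one (by simp) 0,
        Matrix.permanent_eq_elem_of_card_eq_one (by simp) 0]
      simp only [Matrix.submatrix_apply, sa1_zero]
      norm_num [Dmat]
  | (k+3), e, he => by
      have ih1 := Dval (k+2) (-e) (by rw [neg_mul_neg]; exact he)
      have ih0 := Dval k (-e) (by rw [neg_mul_neg]; exact he)
      rw [Drec k e 2 he, ih1, ih0]
      have h1 : Nat.fib (k+3+3) = Nat.fib (k+3+1) + Nat.fib (k+3+2) := Nat.fib_add_two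
      have h2 : Nat.fib (k+3+2) = Nat.fib (k+3) + Nat.fib (k+3+1) := Nat.fib_add_two
      push_cast [h1, h2]
      ring

lemma rev_eq (n : ℕ) : ((Hmat n).submatrix (Fin.rev) (Fin.rev)) = Dmat n ((-1)^n) 1 := by
  have key : ∀ a b : ℕ, a + b = n → ((-1:ℤ))^a = (-1)^n * (-1)^b := by
    intro a b hab
    subst hab
    rw [pow_add, mul_assoc, ← pow_add, ← two_mul, pow_mul]
    norm_num
  ext i j
  have hi := i.isLt
  have hj := j.isLt
  simp only [Hmat, Dmat, Matrix.submatrix_apply, Matrix.of_apply, Fin.val_rev]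
  split_ifs <;> first | rfl | omega | (exact key _ _ (by omega))

lemma perm_rev {n : ℕ} (M : Matrix (Fin n) (Fin n) ℤ) :
    (M.submatrix Fin.rev Fin.rev).permanent = M.permanent := by
  have h : M.submatrix Fin.rev Fin.rev
      = (M.submatrix (⇑(Fin.revPerm : Equiv.Perm (Fin n))) id).submatrix id
          (⇑(Fin.revPerm : Equiv.Perm (Fin n))) := by
    rw [Matrix.submatrix_submatrix]
    rfl
  rw [h, Matrix.permanent_permute_rows, Matrix.permanent_permute_cols]

end PermH

theorem permanent_H (n : ℕ) :
    Matrix.permanent (Hmat n) = (Nat.fib (n + 1) : ℤ) := by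
  match n with
  | 0 =>
    rw [Matrix.permanent_isEmpty]
    decide
  | 1 =>
    rw [Matrix.permanent_eq_elem_of_card_eq_one (by simp) 0]
    show Hmat 1 0 0 = _
    norm_num [Hmat]
  | 2 =>
    rw [PermH.expand_two_col (m := 0) (Hmat 2) (fun i => i.elim0),
      Matrix.permanent_eq_elem_of_card_eq_one (by simp) 0,
      Matrix.permanent_eq_elem_of_card_eq_one (by simp) 0]
    simp only [Matrix.submatrix_apply, PermH.sa1_zero]
    norm_num [Hmat]
  | (k+3) =>
    have he : ((-1:ℤ))^(k+3) * (-1)^(k+3) = 1 := by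
      rw [← pow_add, ← two_mul, pow_mul]
      norm_num
    have hne : (-((-1:ℤ))^(k+3)) * (-((-1:ℤ))^(k+3)) = 1 := by rw [neg_mul_neg]; exact he
    have h0 : Matrix.permanent (Hmat (k+3))
        = Matrix.permanent (PermH.Dmat (k+3) ((-1)^(k+3)) 1) := by
      rw [← PermH.rev_eq, PermH.perm_rev]
    rw [h0, PermH.Drec k _ 1 he, PermH.Dval (k+2) _ hne, PermH.Dval k _ hne]
    have h2 : Nat.fib (k+2+3) = Nat.fib (k+3) + Nat.fib (k+3+1) := Nat.fib_add_two
    push_cast [h2]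
    ring
end

section
/- Let K_n be the n×n lower Hessenberg matrix identical to H_n except that its (1,2) entry is -3 instead of -1; i.e., superdiagonal entries are -3, 1, -1, 1, -1, ..., main diagonal entries are all 2 except the last which is 1, second subdiagonal entries are all 1, and all other entries are 0. Then per K_n = L_{n-2}, the (n-2)nd Lucas number, for n ≥ 3. -/
set_option maxHeartbeats 1000000


open Finset Nat

def Kmat (n : ℕ) : Matrix (Fin n) (Fin n) ℤ := Matrix.of fun i j =>
  if (i : ℕ) = 0 ∧ (j : ℕ) = 1 then -3
  else if (j : ℕ) = (i : ℕ) + 1 then (-1) ^ ((i : ℕ) + 1)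
  else if (i : ℕ) = (j : ℕ) then (if (i : ℕ) = n - 1 then 1 else 2)
  else if (i : ℕ) = (j : ℕ) + 2 then 1 else 0

/-! ### Auxiliary machinery -/

theorem per_succ_column_zero {n : ℕ} (A : Matrix (Fin (n+1)) (Fin (n+1)) ℤ) :
    A.permanent = ∑ i : Fin (n+1), A i 0 * (A.submatrix i.succAbove Fin.succ).permanent := by
  rw [Matrix.permanent, Finset.univ_perm_fin_succ, ← Finset.univ_product_univ]
  simp only [Finset.sum_map, Equiv.toEmbedding_apply, Finset.sum_product]
  refine Finset.sum_congr rfl fun i _ => Fin.cases ?_ (fun i => ?_) i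
  · simp [Fin.prod_univ_succ, Matrix.permanent, Finset.mul_sum,
      Equiv.Perm.decomposeFin_symm_apply_zero, Equiv.Perm.decomposeFin_symm_apply_succ,
      Equiv.swap_self]
  · have h : (A.submatrix (Fin.succ i).succAbove Fin.succ).permanent
        = ∑ σ : Equiv.Perm (Fin n), ∏ x, A ((Fin.succ i).succAbove (Fin.cycleRange i (σ x))) x.succ := by
      rw [← Matrix.permanent_permute_cols (Fin.cycleRange i)
        (A.submatrix (Fin.succ i).succAbove Fin.succ)]
      simp [Matrix.permanent, Matrix.submatrix]
    rw [h, Finset.mul_sum]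
    refine Finset.sum_congr rfl fun σ _ => ?_
    rw [Fin.prod_univ_succ]
    simp [Equiv.Perm.decomposeFin_symm_apply_zero, Equiv.Perm.decomposeFin_symm_apply_succ,
      Fin.succAbove_cycleRange]

theorem per_succ_row_zero {n : ℕ} (A : Matrix (Fin (n+1)) (Fin (n+1)) ℤ) :
    A.permanent = ∑ j : Fin (n+1), A 0 j * (A.submatrix Fin.succ j.succAbove).permanent := by
  rw [← Matrix.permanent_transpose A, per_succ_column_zero]
  refine Finset.sum_congr rfl fun j _ => ?_
  rw [← Matrix.permanent_transpose (A.submatrix Fin.succ j.succAbove)]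
  rfl

theorem sum_two {α : Type*} [Fintype α] [DecidableEq α] (f : α → ℤ) (a b : α) (hab : a ≠ b)
    (h : ∀ x, x ≠ a → x ≠ b → f x = 0) : ∑ x, f x = f a + f b := by
  classical
  rw [← Finset.sum_subset (Finset.subset_univ {a, b}) (by intro x _ hx; simp at hx; tauto)]
  rw [Finset.sum_pair hab]

theorem sum_one {α : Type*} [Fintype α] [DecidableEq α] (f : α → ℤ) (a : α)
    (h : ∀ x, x ≠ a → f x = 0) : ∑ x, f x = f a :=
  Finset.sum_eq_single_of_mem a (Finset.mem_univ a) (fun x _ hx => h x hx)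

def Bmat (m : ℕ) (e : ℤ) : Matrix (Fin m) (Fin m) ℤ := Matrix.of fun i j =>
  if (j : ℕ) = (i : ℕ) + 1 then e * (-1) ^ (i : ℕ)
  else if (i : ℕ) = (j : ℕ) then (if (i : ℕ) = m - 1 then 1 else 2)
  else if (i : ℕ) = (j : ℕ) + 2 then 1 else 0

lemma succAbove2_val {m : ℕ} (x : Fin (m+2)) :
    (((⟨2, by omega⟩ : Fin (m+3)).succAbove x) : ℕ) = if (x:ℕ) < 2 then (x:ℕ) else (x:ℕ)+1 := by
  rw [Fin.succAbove]
  split_ifs with h1 h2 h3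
  · rfl
  · exact absurd (by exact_mod_cast h1) h2
  · exact absurd (by exact_mod_cast h3) h1
  · rfl

lemma sa2_val0 {m : ℕ} : (((⟨2, by omega⟩ : Fin (m+3)).succAbove (0 : Fin (m+2))) : ℕ) = 0 := by
  rw [succAbove2_val]; norm_num

lemma sa2_val1 {m : ℕ} :
    (((⟨2, by omega⟩ : Fin (m+3)).succAbove (Fin.succ (0 : Fin (m+1)))) : ℕ) = 1 := by
  rw [succAbove2_val]; norm_num

lemma sa2_valss {m : ℕ} (i : Fin m) :
    (((⟨2, by omega⟩ : Fin (m+3)).succAbove (Fin.succ (Fin.succ i))) : ℕ) = (i:ℕ) + 3 := by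
  rw [succAbove2_val, if_neg (by simp)]; simp

lemma Bminor0 {m : ℕ} (e : ℤ) :
    (Bmat (m+1) e).submatrix ((0 : Fin (m+1)).succAbove) Fin.succ = Bmat m (-e) := by
  ext i j
  simp only [Matrix.submatrix_apply, Fin.succAbove_zero, Bmat, Matrix.of_apply, ite_true, ite_false, false_and, true_and, and_true, and_false, and_self, Fin.val_succ]
  all_goals (try split_ifs) <;> first | rfl | contradiction | omega | (exfalso; omega) | (rw [pow_succ]; ring1) | (rw [pow_add]; ring1) | ring1 | (simp_all [pow_succ, pow_add]; done) | (exfalso; simp_all; done)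

lemma Brec (m : ℕ) (e : ℤ) :
    (Bmat (m+3) e).permanent
      = 2 * (Bmat (m+2) (-e)).permanent + (e * -e) * (Bmat m (-e)).permanent := by
  rw [per_succ_column_zero, sum_two _ 0 (⟨2, by omega⟩ : Fin (m+3)) (by simp [Fin.ext_iff])
    (fun x hx0 hx2 => by
      have h0 : (x:ℕ) ≠ 0 := fun h => hx0 (Fin.ext (by simpa using h))
      have h2 : (x:ℕ) ≠ 2 := fun h => hx2 (Fin.ext (by simpa using h))
      have hz : Bmat (m+3) e x 0 = 0 := by
        simp only [Bmat, Matrix.of_apply, ite_true, ite_false, false_and, true_and, and_true, and_false, and_self, Fin.val_zero, Fin.val_mk]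
        all_goals (try split_ifs) <;> first | rfl | contradiction | omega | (exfalso; omega) | (rw [pow_succ]; ring1) | (rw [pow_add]; ring1) | ring1 | (simp_all [pow_succ, pow_add]; done) | (exfalso; simp_all; done)
      rw [hz, zero_mul])]
  have e00 : Bmat (m+3) e 0 0 = 2 := by
    simp only [Bmat, Matrix.of_apply, ite_true, ite_false, false_and, true_and, and_true, and_false, and_self, Fin.val_zero, Fin.val_mk]
    all_goals (try split_ifs) <;> first | rfl | contradiction | omega | (exfalso; omega) | (rw [pow_succ]; ring1) | (rw [pow_add]; ring1) | ring1 | (simp_all [pow_succ, pow_add]; done) | (exfalso; simp_all; done)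
  have e20 : Bmat (m+3) e ⟨2, by omega⟩ 0 = 1 := by
    simp only [Bmat, Matrix.of_apply, ite_true, ite_false, false_and, true_and, and_true, and_false, and_self, Fin.val_zero, Fin.val_mk]
    all_goals (try split_ifs) <;> first | rfl | contradiction | omega | (exfalso; omega) | (rw [pow_succ]; ring1) | (rw [pow_add]; ring1) | ring1 | (simp_all [pow_succ, pow_add]; done) | (exfalso; simp_all; done)
  rw [e00, e20, Bminor0, one_mul]
  congr 1
  set M2 := (Bmat (m+3) e).submatrix (⟨2, by omega⟩ : Fin (m+3)).succAbove Fin.succ with hM2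
  rw [per_succ_row_zero, sum_one _ 0 (fun x hx => by
      have h0 : (x:ℕ) ≠ 0 := fun h => hx (Fin.ext (by simpa using h))
      have hz : M2 0 x = 0 := by
        simp only [hM2, Matrix.submatrix_apply, Bmat, Matrix.of_apply, ite_true, ite_false, false_and, true_and, and_true, and_false, and_self, Fin.val_succ, sa2_val0]
        all_goals (try split_ifs) <;> first | rfl | contradiction | omega | (exfalso; omega) | (rw [pow_succ]; ring1) | (rw [pow_add]; ring1) | ring1 | (simp_all [pow_succ, pow_add]; done) | (exfalso; simp_all; done)
      rw [hz, zero_mul])]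
  have f00 : M2 0 0 = e := by
    simp only [hM2, Matrix.submatrix_apply, Bmat, Matrix.of_apply, ite_true, ite_false, false_and, true_and, and_true, and_false, and_self, Fin.val_succ, sa2_val0,
      Fin.val_zero]
    all_goals (try split_ifs) <;> first | rfl | contradiction | omega | (exfalso; omega) | (rw [pow_succ]; ring1) | (rw [pow_add]; ring1) | ring1 | (simp_all [pow_succ, pow_add]; done) | (exfalso; simp_all; done)
  rw [f00]
  set M3 := M2.submatrix Fin.succ ((0 : Fin (m+2)).succAbove) with hM3
  rw [per_succ_row_zero, sum_one _ 0 (fun x hx => by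
      have h0 : (x:ℕ) ≠ 0 := fun h => hx (Fin.ext (by simpa using h))
      have hz : M3 0 x = 0 := by
        simp only [hM3, hM2, Matrix.submatrix_apply, Fin.succAbove_zero, Bmat, Matrix.of_apply, ite_true, ite_false, false_and, true_and, and_true, and_false, and_self,
          Fin.val_succ, sa2_val1]
        all_goals (try split_ifs) <;> first | rfl | contradiction | omega | (exfalso; omega) | (rw [pow_succ]; ring1) | (rw [pow_add]; ring1) | ring1 | (simp_all [pow_succ, pow_add]; done) | (exfalso; simp_all; done)
      rw [hz, zero_mul])]
  have g00 : M3 0 0 = -e := by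
    simp only [hM3, hM2, Matrix.submatrix_apply, Fin.succAbove_zero, Bmat, Matrix.of_apply, ite_true, ite_false, false_and, true_and, and_true, and_false, and_self,
      Fin.val_succ, sa2_val1, Fin.val_zero]
    all_goals (try split_ifs) <;> first | rfl | contradiction | omega | (exfalso; omega) | (rw [pow_succ]; ring1) | (rw [pow_add]; ring1) | ring1 | (simp_all [pow_succ, pow_add]; done) | (exfalso; simp_all; done)
  have hrest : M3.submatrix Fin.succ ((0 : Fin (m+1)).succAbove) = Bmat m (-e) := by
    ext i j
    simp only [hM3, hM2, Matrix.submatrix_apply, Fin.succAbove_zero, Bmat, Matrix.of_apply, ite_true, ite_false, false_and, true_and, and_true, and_false, and_self,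
      Fin.val_succ, sa2_valss]
    all_goals (try split_ifs) <;> first | rfl | contradiction | omega | (exfalso; omega) | (rw [pow_succ]; ring1) | (rw [pow_add]; ring1) | ring1 | (simp_all [pow_succ, pow_add]; done) | (exfalso; simp_all; done)
  rw [g00, hrest]
  ring

lemma pB1 (e : ℤ) : (Bmat 1 e).permanent = 1 := by
  rw [Matrix.permanent_unique]
  simp [Bmat]

lemma pB2 (e : ℤ) : (Bmat 2 e).permanent = 2 := by
  rw [per_succ_column_zero, Fin.sum_univ_two]
  have h0 : Bmat 2 e 0 0 = 2 := by simp [Bmat]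
  have h1 : Bmat 2 e 1 0 = 0 := by simp [Bmat]
  have hm : (Bmat 2 e).submatrix ((0 : Fin 2).succAbove) Fin.succ = Bmat 1 (-e) :=
    Bminor0 (m := 1) e
  rw [h0, h1, hm, pB1, zero_mul, add_zero, mul_one]

lemma perB : ∀ m : ℕ, ∀ e : ℤ, e = 1 ∨ e = -1 → (Bmat m e).permanent = Nat.fib (m+1) := by
  intro m
  induction m using Nat.strong_induction_on with
  | _ m ih =>
    match m with
    | 0 => intro e he; rw [Matrix.permanent_isEmpty]; simp
    | 1 => intro e he; rw [pB1]; simp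
    | 2 => intro e he; rw [pB2]; norm_num [Nat.fib]
    | (k+3) =>
      intro e he
      have hne : -e = 1 ∨ -e = -1 := by rcases he with h | h <;> subst h <;> simp
      rw [Brec, ih (k+2) (by omega) (-e) hne, ih k (by omega) (-e) hne]
      have he2 : e * -e = -1 := by rcases he with h | h <;> subst h <;> ring
      rw [he2]
      have f1 := Nat.fib_add_two (n := k+2)
      have f2 := Nat.fib_add_two (n := k+1)
      push_cast
      push_cast at f1 f2
      linarith

lemma Kminor0 {m : ℕ} :
    (Kmat (m+3)).submatrix ((0 : Fin (m+3)).succAbove) Fin.succ = Bmat (m+2) 1 := by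
  ext i j
  simp only [Matrix.submatrix_apply, Fin.succAbove_zero, Kmat, Bmat, Matrix.of_apply, ite_true, ite_false, false_and, true_and, and_true, and_false, and_self, Fin.val_succ]
  all_goals (try split_ifs) <;> first | rfl | contradiction | omega | (exfalso; omega) | (rw [pow_succ]; ring1) | (rw [pow_add]; ring1) | ring1 | (simp_all [pow_succ, pow_add]; done) | (exfalso; simp_all; done)

lemma Krec (m : ℕ) :
    (Kmat (m+3)).permanent
      = 2 * (Bmat (m+2) 1).permanent - 3 * (Bmat m 1).permanent := by
  rw [per_succ_column_zero, sum_two _ 0 (⟨2, by omega⟩ : Fin (m+3)) (by simp [Fin.ext_iff])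
    (fun x hx0 hx2 => by
      have h0 : (x:ℕ) ≠ 0 := fun h => hx0 (Fin.ext (by simpa using h))
      have h2 : (x:ℕ) ≠ 2 := fun h => hx2 (Fin.ext (by simpa using h))
      have hz : Kmat (m+3) x 0 = 0 := by
        simp only [Kmat, Matrix.of_apply, ite_true, ite_false, false_and, true_and, and_true, and_false, and_self, Fin.val_zero, Fin.val_mk]
        all_goals (try split_ifs) <;> first | rfl | contradiction | omega | (exfalso; omega) | (rw [pow_succ]; ring1) | (rw [pow_add]; ring1) | ring1 | (simp_all [pow_succ, pow_add]; done) | (exfalso; simp_all; done)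
      rw [hz, zero_mul])]
  have e00 : Kmat (m+3) 0 0 = 2 := by
    simp only [Kmat, Matrix.of_apply, ite_true, ite_false, false_and, true_and, and_true, and_false, and_self, Fin.val_zero, Fin.val_mk]
    all_goals (try split_ifs) <;> first | rfl | contradiction | omega | (exfalso; omega) | (rw [pow_succ]; ring1) | (rw [pow_add]; ring1) | ring1 | (simp_all [pow_succ, pow_add]; done) | (exfalso; simp_all; done)
  have e20 : Kmat (m+3) ⟨2, by omega⟩ 0 = 1 := by
    simp only [Kmat, Matrix.of_apply, ite_true, ite_false, false_and, true_and, and_true, and_false, and_self, Fin.val_zero, Fin.val_mk]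
    all_goals (try split_ifs) <;> first | rfl | contradiction | omega | (exfalso; omega) | (rw [pow_succ]; ring1) | (rw [pow_add]; ring1) | ring1 | (simp_all [pow_succ, pow_add]; done) | (exfalso; simp_all; done)
  rw [e00, e20, Kminor0, one_mul]
  set M2 := (Kmat (m+3)).submatrix (⟨2, by omega⟩ : Fin (m+3)).succAbove Fin.succ with hM2
  have hM2per : M2.permanent = -3 * (Bmat m 1).permanent := by
   rw [per_succ_row_zero, sum_one _ 0 (fun x hx => by
      have h0 : (x:ℕ) ≠ 0 := fun h => hx (Fin.ext (by simpa using h))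
      have hz : M2 0 x = 0 := by
        simp only [hM2, Matrix.submatrix_apply, Kmat, Matrix.of_apply, ite_true, ite_false, false_and, true_and, and_true, and_false, and_self, Fin.val_succ, sa2_val0]
        all_goals (try split_ifs) <;> first | rfl | contradiction | omega | (exfalso; omega) | (rw [pow_succ]; ring1) | (rw [pow_add]; ring1) | ring1 | (simp_all [pow_succ, pow_add]; done) | (exfalso; simp_all; done)
      rw [hz, zero_mul])]
   have f00 : M2 0 0 = -3 := by
    simp only [hM2, Matrix.submatrix_apply, Kmat, Matrix.of_apply, ite_true, ite_false, false_and, true_and, and_true, and_false, and_self, Fin.val_succ, sa2_val0,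
      Fin.val_zero]
    all_goals (try split_ifs) <;> first | rfl | contradiction | omega | (exfalso; omega) | (rw [pow_succ]; ring1) | (rw [pow_add]; ring1) | ring1 | (simp_all [pow_succ, pow_add]; done) | (exfalso; simp_all; done)
   rw [f00]
   set M3 := M2.submatrix Fin.succ ((0 : Fin (m+2)).succAbove) with hM3
   rw [per_succ_row_zero, sum_one _ 0 (fun x hx => by
      have h0 : (x:ℕ) ≠ 0 := fun h => hx (Fin.ext (by simpa using h))
      have hz : M3 0 x = 0 := by
        simp only [hM3, hM2, Matrix.submatrix_apply, Fin.succAbove_zero, Kmat, Matrix.of_apply, ite_true, ite_false, false_and, true_and, and_true, and_false, and_self,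
          Fin.val_succ, sa2_val1]
        all_goals (try split_ifs) <;> first | rfl | contradiction | omega | (exfalso; omega) | (rw [pow_succ]; ring1) | (rw [pow_add]; ring1) | ring1 | (simp_all [pow_succ, pow_add]; done) | (exfalso; simp_all; done)
      rw [hz, zero_mul])]
   have g00 : M3 0 0 = 1 := by
    simp only [hM3, hM2, Matrix.submatrix_apply, Fin.succAbove_zero, Kmat, Matrix.of_apply, ite_true, ite_false, false_and, true_and, and_true, and_false, and_self,
      Fin.val_succ, sa2_val1, Fin.val_zero]
    all_goals (try split_ifs) <;> first | rfl | contradiction | omega | (exfalso; omega) | (rw [pow_succ]; ring1) | (rw [pow_add]; ring1) | ring1 | (simp_all [pow_succ, pow_add]; done) | (exfalso; simp_all; done)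
   have hrest : M3.submatrix Fin.succ ((0 : Fin (m+1)).succAbove) = Bmat m 1 := by
    ext i j
    simp only [hM3, hM2, Matrix.submatrix_apply, Fin.succAbove_zero, Kmat, Bmat, Matrix.of_apply, ite_true, ite_false, false_and, true_and, and_true, and_false, and_self,
      Fin.val_succ, sa2_valss]
    all_goals (try split_ifs) <;> first | rfl | contradiction | omega | (exfalso; omega) | (rw [pow_succ]; ring1) | (rw [pow_add]; ring1) | ring1 | (simp_all [pow_succ, pow_add]; done) | (exfalso; simp_all; done)
   rw [g00, hrest]
   ring
  rw [hM2per]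
  ring

lemma lucas_eq : ∀ k : ℕ, (lucas k : ℤ) = 2 * Nat.fib (k+2) - 3 * Nat.fib k := by
  intro k
  induction k using Nat.strong_induction_on with
  | _ k ih =>
    match k with
    | 0 => simp [lucas]
    | 1 => norm_num [lucas]
    | (k+2) =>
      have h1 := ih (k+1) (by omega)
      have h2 := ih k (by omega)
      have hl : lucas (k+2) = lucas (k+1) + lucas k := rfl
      rw [hl]
      have f1 := Nat.fib_add_two (n := k+2)
      have f2 := Nat.fib_add_two (n := k+1)
      have f3 := Nat.fib_add_two (n := k)
      push_cast
      push_cast at h1 h2 f1 f2 f3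
      linarith

theorem permanent_K (n : ℕ) (hn : 3 ≤ n) :
    Matrix.permanent (Kmat n) = (lucas (n - 2) : ℤ) := by
  obtain ⟨m, rfl⟩ : ∃ m, n = m + 3 := ⟨n - 3, by omega⟩
  rw [Krec m, perB (m+2) 1 (Or.inl rfl), perB m 1 (Or.inl rfl)]
  have h2 : m + 3 - 2 = m + 1 := by omega
  rw [h2, lucas_eq (m+1)]
end

section
/- Let N_n be the n×n lower Hessenberg matrix with (1,1) entry 3, (1,2) entry -2, superdiagonal entries (i,i+1) = (-1)^i for 2 ≤ i ≤ n-1, main diagonal entries 2 for i ≥ 2, second subdiagonal entries all 1, and all other entries 0. Then for n ≥ 2, per N_n = Σ_{i=0}^{n} L_i, the sum of the first n+1 Lucas numbers. -/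
open Finset Nat

def Nmat (n : ℕ) : Matrix (Fin n) (Fin n) ℤ := Matrix.of fun i j =>
  if (i : ℕ) = 0 ∧ (j : ℕ) = 0 then 3
  else if (i : ℕ) = 0 ∧ (j : ℕ) = 1 then -2
  else if (j : ℕ) = (i : ℕ) + 1 then (-1) ^ ((i : ℕ) + 1)
  else if (i : ℕ) = (j : ℕ) then 2
  else if (i : ℕ) = (j : ℕ) + 2 then 1 else 0

section Expansion

open Equiv

theorem permanent_succ_column_zero {n : ℕ} {R : Type*} [CommSemiring R]
    (A : Matrix (Fin n.succ) (Fin n.succ) R) :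
    A.permanent = ∑ i : Fin n.succ, A i 0 * (A.submatrix i.succAbove Fin.succ).permanent := by
  rw [Matrix.permanent, Finset.univ_perm_fin_succ, ← Finset.univ_product_univ]
  simp only [Finset.sum_map, Equiv.toEmbedding_apply, Finset.sum_product]
  refine Finset.sum_congr rfl fun i _ => Fin.cases ?_ (fun i => ?_) i
  · simp only [Fin.prod_univ_succ, Matrix.permanent, Finset.mul_sum,
      Equiv.Perm.decomposeFin_symm_apply_zero, Equiv.Perm.decomposeFin_symm_apply_succ,
      Equiv.swap_self, Fin.succAbove_zero, Equiv.coe_refl, id, Matrix.submatrix_apply]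
  · rw [← Matrix.permanent_permute_cols i.cycleRange
      (A.submatrix (Fin.succ i).succAbove Fin.succ), Matrix.permanent, Finset.mul_sum]
    refine Finset.sum_congr rfl fun σ _ => ?_
    rw [Fin.prod_univ_succ, Equiv.Perm.decomposeFin_symm_apply_zero]
    congr 1
    refine Finset.prod_congr rfl fun j _ => ?_
    rw [Equiv.Perm.decomposeFin_symm_apply_succ, Matrix.submatrix_apply, Matrix.submatrix_apply,
      Fin.succAbove_cycleRange]
    rfl

theorem permanent_submatrix_rev {R : Type*} [CommSemiring R] {n : ℕ}
    (A : Matrix (Fin n) (Fin n) R) :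
    (A.submatrix Fin.rev Fin.rev).permanent = A.permanent := by
  have h : (A.submatrix Fin.rev Fin.rev)
      = (A.submatrix (Fin.revPerm : Equiv.Perm (Fin n)) id).submatrix id Fin.revPerm := by
    ext i j; simp [Matrix.submatrix_apply]
  rw [h, Matrix.permanent_permute_rows, Matrix.permanent_permute_cols]

theorem permanent_succ_column_last {n : ℕ} {R : Type*} [CommSemiring R]
    (A : Matrix (Fin n.succ) (Fin n.succ) R) :
    A.permanent = ∑ i : Fin n.succ,
      A i (Fin.last n) * (A.submatrix i.succAbove Fin.castSucc).permanent := by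
  rw [← permanent_submatrix_rev A, permanent_succ_column_zero]
  refine Fintype.sum_equiv Fin.revPerm _ _ fun i => ?_
  congr 1
  simp only [Fin.revPerm_apply]
  rw [Matrix.submatrix_submatrix, ← permanent_submatrix_rev
      ((A.submatrix (Fin.rev i).succAbove Fin.castSucc)), Matrix.submatrix_submatrix]
  congr 1
  ext x y
  simp [Matrix.submatrix_apply, Function.comp, Fin.rev_succAbove, Fin.rev_succ]

theorem permanent_zero_row {R : Type*} [CommSemiring R] {n : ℕ} (A : Matrix (Fin n) (Fin n) R)
    (r : Fin n) (h : ∀ j, A r j = 0) : A.permanent = 0 := by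
  refine Finset.sum_eq_zero fun σ _ => ?_
  refine Finset.prod_eq_zero (Finset.mem_univ (σ⁻¹ r)) ?_
  rw [show σ (σ⁻¹ r) = r from σ.apply_symm_apply r]
  exact h _

end Expansion

theorem coe_succAbove {n : ℕ} (p : Fin (n+1)) (i : Fin n) :
    (p.succAbove i : ℕ) = if (i:ℕ) < (p:ℕ) then (i:ℕ) else (i:ℕ)+1 := by
  rcases lt_or_ge (Fin.castSucc i) p with h | h
  · rw [Fin.succAbove_of_castSucc_lt _ _ h, Fin.coe_castSucc,
      if_pos (by simpa [Fin.lt_def] using h)]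
  · rw [Fin.succAbove_of_le_castSucc _ _ h, Fin.val_succ,
      if_neg (by simpa [Fin.lt_def, Fin.le_def, not_lt] using h)]

theorem succAbove_cases {n : ℕ} (p : Fin (n+1)) (i : Fin n) :
    ((p.succAbove i : ℕ) = (i:ℕ) ∧ (i:ℕ) < (p:ℕ)) ∨
      ((p.succAbove i : ℕ) = (i:ℕ)+1 ∧ (p:ℕ) ≤ (i:ℕ)) := by
  rw [coe_succAbove]; split_ifs with h
  · exact Or.inl ⟨rfl, h⟩
  · exact Or.inr ⟨rfl, not_lt.1 h⟩

theorem nmat_eq_of_coe {n m : ℕ} (i j : Fin n) (i' j' : Fin m)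
    (hi : (i:ℕ) = (i':ℕ)) (hj : (j:ℕ) = (j':ℕ)) : Nmat n i j = Nmat m i' j' := by
  simp only [Nmat, Matrix.of_apply, hi, hj]

theorem nmat_zero {n : ℕ} (i j : Fin n) (h1 : ¬((i:ℕ) = 0 ∧ (j:ℕ) = 0))
    (h2 : ¬((i:ℕ) = 0 ∧ (j:ℕ) = 1)) (h3 : (j:ℕ) ≠ (i:ℕ)+1) (h4 : (i:ℕ) ≠ (j:ℕ))
    (h5 : (i:ℕ) ≠ (j:ℕ)+2) : Nmat n i j = 0 := by
  simp only [Nmat, Matrix.of_apply, if_neg h1, if_neg h2, if_neg h3, if_neg h4, if_neg h5]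

theorem nmat_super {n : ℕ} (i j : Fin n) (a : ℕ) (h1 : (i:ℕ) ≠ 0) (h3 : (j:ℕ) = (i:ℕ)+1)
    (ha : a = (i:ℕ)+1) : Nmat n i j = (-1)^a := by
  subst ha
  have c1 : ¬((i:ℕ) = 0 ∧ (j:ℕ) = 0) := fun h => h1 h.1
  have c2 : ¬((i:ℕ) = 0 ∧ (j:ℕ) = 1) := fun h => h1 h.1
  simp only [Nmat, Matrix.of_apply, if_neg c1, if_neg c2, if_pos h3]

theorem nmat_diag {n : ℕ} (i j : Fin n) (h1 : (i:ℕ) ≠ 0) (h4 : (i:ℕ) = (j:ℕ)) :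
    Nmat n i j = 2 := by
  have c1 : ¬((i:ℕ) = 0 ∧ (j:ℕ) = 0) := fun h => h1 h.1
  have c2 : ¬((i:ℕ) = 0 ∧ (j:ℕ) = 1) := fun h => h1 h.1
  have c3 : (j:ℕ) ≠ (i:ℕ)+1 := by omega
  simp only [Nmat, Matrix.of_apply, if_neg c1, if_neg c2, if_neg c3, if_pos h4]

theorem nmat_low {n : ℕ} (i j : Fin n) (h5 : (i:ℕ) = (j:ℕ)+2) : Nmat n i j = 1 := by
  have c1 : ¬((i:ℕ) = 0 ∧ (j:ℕ) = 0) := by omega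
  have c2 : ¬((i:ℕ) = 0 ∧ (j:ℕ) = 1) := by omega
  have c3 : (j:ℕ) ≠ (i:ℕ)+1 := by omega
  have c4 : (i:ℕ) ≠ (j:ℕ) := by omega
  simp only [Nmat, Matrix.of_apply, if_neg c1, if_neg c2, if_neg c3, if_neg c4, if_pos h5]

lemma rec4 (m : ℕ) :
    (Nmat (m+4)).permanent = 2 * (Nmat (m+3)).permanent - (Nmat (m+1)).permanent := by
  obtain ⟨q, hq⟩ : ∃ q : Fin (m+3), (q:ℕ) = m+1 := ⟨⟨m+1, by omega⟩, rfl⟩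
  have Hmain : (Nmat (m+4)).permanent
      = (-1:ℤ)^(m+3) * ((Nmat (m+4)).submatrix
          ((Fin.last (m+2)).castSucc).succAbove Fin.castSucc).permanent
        + 2 * (Nmat (m+3)).permanent := by
    rw [permanent_succ_column_last (Nmat (m+4)), Fin.sum_univ_castSucc, Fin.sum_univ_castSucc]
    have h0 : ∀ i : Fin (m+2), Nmat (m+4) i.castSucc.castSucc (Fin.last (m+3)) = 0 := by
      intro i
      have := i.isLt
      apply nmat_zero <;> (try simp only [Fin.coe_castSucc, Fin.val_last]) <;> omega
    have e1 : Nmat (m+4) (Fin.last (m+2)).castSucc (Fin.last (m+3)) = (-1:ℤ)^(m+3) := by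
      apply nmat_super <;> (try simp only [Fin.coe_castSucc, Fin.val_last]) <;> omega
    have e2 : Nmat (m+4) (Fin.last (m+3)) (Fin.last (m+3)) = 2 := by
      apply nmat_diag <;> (try simp only [Fin.val_last]) <;> omega
    have e3 : (Nmat (m+4)).submatrix (Fin.last (m+3)).succAbove Fin.castSucc = Nmat (m+3) := by
      ext i j
      rw [Matrix.submatrix_apply, Fin.succAbove_last]
      exact nmat_eq_of_coe _ _ _ _ (Fin.coe_castSucc i) (Fin.coe_castSucc j)
    rw [Finset.sum_eq_zero (fun i _ => by rw [h0 i, zero_mul]), e1, e2, e3, zero_add]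
  have HB1 : ((Nmat (m+4)).submatrix
        ((Fin.last (m+2)).castSucc).succAbove Fin.castSucc).permanent
      = (-1:ℤ)^(m+2) * (((Nmat (m+4)).submatrix
          ((Fin.last (m+2)).castSucc).succAbove Fin.castSucc).submatrix
            q.succAbove Fin.castSucc).permanent := by
    rw [permanent_succ_column_last, Finset.sum_eq_single q]
    · congr 1
      have c := succAbove_cases ((Fin.last (m+2)).castSucc) q
      simp only [Fin.coe_castSucc, Fin.val_last, hq] at c
      rw [Matrix.submatrix_apply]
      apply nmat_super <;> (try simp only [Fin.coe_castSucc, Fin.val_last]) <;> omega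
    · intro b _ hb
      have hb' : (b:ℕ) ≠ m+1 := by
        intro h; exact hb (Fin.ext (h.trans hq.symm))
      have hblt := b.isLt
      have c := succAbove_cases ((Fin.last (m+2)).castSucc) b
      simp only [Fin.coe_castSucc, Fin.val_last] at c
      rw [Matrix.submatrix_apply]
      have hz : Nmat (m+4) (((Fin.last (m+2)).castSucc).succAbove b)
          (Fin.castSucc (Fin.last (m+2))) = 0 := by
        apply nmat_zero <;> (try simp only [Fin.coe_castSucc, Fin.val_last]) <;> omega
      rw [hz, zero_mul]
    · intro h; exact absurd (Finset.mem_univ _) h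
  have HB2 : (((Nmat (m+4)).submatrix
        ((Fin.last (m+2)).castSucc).succAbove Fin.castSucc).submatrix
          q.succAbove Fin.castSucc).permanent = (Nmat (m+1)).permanent := by
    rw [permanent_succ_column_last, Fin.sum_univ_castSucc, Fin.sum_univ_castSucc]
    have h0 : ∀ i : Fin m, (((Nmat (m+4)).submatrix
        ((Fin.last (m+2)).castSucc).succAbove Fin.castSucc).submatrix
          q.succAbove Fin.castSucc) i.castSucc.castSucc (Fin.last (m+1)) = 0 := by
      intro i
      have := i.isLt
      have c1 := succAbove_cases q i.castSucc.castSucc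
      have c2 := succAbove_cases ((Fin.last (m+2)).castSucc) (q.succAbove i.castSucc.castSucc)
      simp only [Fin.coe_castSucc, Fin.val_last, hq] at c1 c2
      simp only [Matrix.submatrix_apply]
      apply nmat_zero <;> (try simp only [Fin.coe_castSucc, Fin.val_last]) <;> omega
    have e2 : (((Nmat (m+4)).submatrix
        ((Fin.last (m+2)).castSucc).succAbove Fin.castSucc).submatrix
          q.succAbove Fin.castSucc) (Fin.last (m+1)) (Fin.last (m+1)) = 1 := by
      have c1 := succAbove_cases q (Fin.last (m+1))
      have c2 := succAbove_cases ((Fin.last (m+2)).castSucc) (q.succAbove (Fin.last (m+1)))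
      simp only [Fin.coe_castSucc, Fin.val_last, hq] at c1 c2
      simp only [Matrix.submatrix_apply]
      apply nmat_low <;> (try simp only [Fin.coe_castSucc, Fin.val_last]) <;> omega
    have hC1 : ((((Nmat (m+4)).submatrix
        ((Fin.last (m+2)).castSucc).succAbove Fin.castSucc).submatrix
          q.succAbove Fin.castSucc).submatrix
            ((Fin.last m).castSucc).succAbove Fin.castSucc).permanent = 0 := by
      refine permanent_zero_row _ (Fin.last m) fun j => ?_
      have hjlt := j.isLt
      have c1 := succAbove_cases ((Fin.last m).castSucc) (Fin.last m)
      have c2 := succAbove_cases q (((Fin.last m).castSucc).succAbove (Fin.last m))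
      have c3 := succAbove_cases ((Fin.last (m+2)).castSucc)
        (q.succAbove (((Fin.last m).castSucc).succAbove (Fin.last m)))
      simp only [Fin.coe_castSucc, Fin.val_last, hq] at c1 c2 c3
      simp only [Matrix.submatrix_apply]
      apply nmat_zero <;> (try simp only [Fin.coe_castSucc, Fin.val_last]) <;> omega
    have hC2 : (((((Nmat (m+4)).submatrix
        ((Fin.last (m+2)).castSucc).succAbove Fin.castSucc).submatrix
          q.succAbove Fin.castSucc)).submatrix
            (Fin.last (m+1)).succAbove Fin.castSucc) = Nmat (m+1) := by
      ext i j
      have hilt := i.isLt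
      have c1 := succAbove_cases (Fin.last (m+1)) i
      have c2 := succAbove_cases q ((Fin.last (m+1)).succAbove i)
      have c3 := succAbove_cases ((Fin.last (m+2)).castSucc)
        (q.succAbove ((Fin.last (m+1)).succAbove i))
      simp only [Fin.coe_castSucc, Fin.val_last, hq] at c1 c2 c3
      simp only [Matrix.submatrix_apply]
      refine nmat_eq_of_coe _ _ _ _ ?_ ?_
      · omega
      · rfl
    rw [Finset.sum_eq_zero (fun i _ => by rw [h0 i, zero_mul]), hC1, e2, hC2,
      mul_zero, zero_add, one_mul, zero_add]
  rw [Hmain, HB1, HB2, ← mul_assoc, ← pow_add]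
  have hpow : (-1:ℤ)^(m+3+(m+2)) = -1 := Odd.neg_one_pow ⟨m+2, by ring⟩
  rw [hpow]
  ring

lemma lucas_sum_rec (m : ℕ) :
    (∑ i ∈ Finset.range (m+5), (lucas i : ℤ))
      = 2 * (∑ i ∈ Finset.range (m+4), (lucas i : ℤ))
        - (∑ i ∈ Finset.range (m+2), (lucas i : ℤ)) := by
  have hl : lucas (m+4) = lucas (m+3) + lucas (m+2) := rfl
  rw [Finset.sum_range_succ, Finset.sum_range_succ, Finset.sum_range_succ,
    show m+4 = m+3+1 from rfl, Finset.sum_range_succ, Finset.sum_range_succ, hl]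
  push_cast
  ring

lemma main_aux : ∀ n : ℕ, (Nmat (n+1)).permanent = ∑ i ∈ Finset.range (n+2), (lucas i : ℤ) := by
  intro n
  induction n using Nat.strong_induction_on with
  | _ n ih =>
    match n, ih with
    | 0, _ => decide
    | 1, _ => decide
    | 2, _ => decide
    | (k+3), ih =>
      have h1 := ih (k+2) (by omega)
      have h2 := ih k (by omega)
      have hr := rec4 k
      rw [show k+3+1 = k+4 from rfl, hr, h1, h2, show k+3+2 = k+5 from rfl,
        show k+2+2 = k+4 from rfl]
      exact (lucas_sum_rec k).symm

theorem permanent_N (n : ℕ) (hn : 2 ≤ n) :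
    Matrix.permanent (Nmat n) = ∑ i ∈ Finset.range (n + 1), (lucas i : ℤ) := by
  obtain ⟨m, rfl⟩ : ∃ m, n = m + 1 := ⟨n - 1, by omega⟩
  exact main_aux m
end

section
/- If A is an m×n nonnegative real matrix whose k-th column contains exactly two nonzero entries a_{ik} ≠ 0 and a_{jk} ≠ 0 with i ≠ j, and B = A_{ij:k} is the (m-1)×(n-1) matrix obtained from A by replacing row i with a_{jk}·(row i) + a_{ik}·(row j) and then deleting row j and column k, then per A = per B (stated for m = n square matrices). -/
open Finset Nat

open Matrix Equiv

variable {n : ℕ}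

variable {n : ℕ}

theorem perm_updateCol_add (M : Matrix (Fin n) (Fin n) ℝ) (j : Fin n) (u v : Fin n → ℝ) :
    permanent (M.updateCol j (u + v)) =
      permanent (M.updateCol j u) + permanent (M.updateCol j v) := by
  simp only [permanent, ← Finset.mul_prod_erase _ _ (Finset.mem_univ j),
    Matrix.updateCol_self, Pi.add_apply, add_mul, ← Finset.sum_add_distrib]
  congr 1 with σ
  congr 2 <;> exact Finset.prod_congr rfl fun x hx => by
    simp [Matrix.updateCol_ne (Finset.ne_of_mem_erase hx)]

theorem perm_updateRow_add (M : Matrix (Fin n) (Fin n) ℝ) (j : Fin n) (u v : Fin n → ℝ) :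
    permanent (M.updateRow j (u + v)) =
      permanent (M.updateRow j u) + permanent (M.updateRow j v) := by
  rw [← permanent_transpose, ← Matrix.updateCol_transpose, perm_updateCol_add,
    Matrix.updateCol_transpose, Matrix.updateCol_transpose, permanent_transpose,
    permanent_transpose]

theorem perm_col_zero (A : Matrix (Fin (n+1)) (Fin (n+1)) ℝ) :
    A.permanent = ∑ r, A r 0 * (A.submatrix r.succAbove Fin.succ).permanent := by
  rw [Matrix.permanent, Finset.univ_perm_fin_succ, ← Finset.univ_product_univ]
  simp only [Finset.sum_map, Equiv.toEmbedding_apply, Finset.sum_product]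
  refine Finset.sum_congr rfl fun p _ => ?_
  have key : ∀ σ : Perm (Fin n), (∏ x, A (Equiv.Perm.decomposeFin.symm (p, σ) x) x)
      = A p 0 * ∏ x, A (swap 0 p (σ x).succ) x.succ := by
    intro σ
    rw [Fin.prod_univ_succ]
    simp
  simp only [key]
  rw [← Finset.mul_sum]
  congr 1
  -- remains: ∑ σ, ∏ x, A (swap 0 p (σ x).succ) x.succ = permanent (A.submatrix p.succAbove Fin.succ)
  refine Fin.cases ?_ (fun i => ?_) p
  · simp [Matrix.permanent, Fin.succAbove_zero]
  · rw [show (A.submatrix (Fin.succ i).succAbove Fin.succ).permanent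
        = ((A.submatrix (Fin.succ i).succAbove Fin.succ).submatrix (Fin.cycleRange i) id).permanent
        from (Matrix.permanent_permute_cols _ _).symm]
    rw [Matrix.permanent]
    refine Finset.sum_congr rfl fun σ _ => Finset.prod_congr rfl fun x _ => ?_
    simp [Fin.succAbove_cycleRange]

theorem perm_col (A : Matrix (Fin (n+1)) (Fin (n+1)) ℝ) (k : Fin (n+1)) :
    A.permanent = ∑ r, A r k * (A.submatrix r.succAbove k.succAbove).permanent := by
  set e : Equiv.Perm (Fin (n+1)) := (finSuccEquiv' (0 : Fin (n+1))).trans (finSuccEquiv' k).symm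
    with he
  have he0 : e 0 = k := by simp [he, finSuccEquiv'_at, finSuccEquiv'_symm_none]
  have hes : ∀ p : Fin n, e p.succ = k.succAbove p := by
    intro p
    have h1 : (0 : Fin (n+1)).succAbove p = p.succ := congr_fun Fin.succAbove_zero p
    rw [he]
    simp only [Equiv.trans_apply]
    rw [← h1, finSuccEquiv'_succAbove, finSuccEquiv'_symm_some]
  rw [← Matrix.permanent_permute_rows e A, perm_col_zero]
  refine Finset.sum_congr rfl fun r _ => ?_
  rw [Matrix.submatrix_apply, id, he0]
  have : (A.submatrix id e).submatrix r.succAbove Fin.succ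
      = A.submatrix r.succAbove k.succAbove := by
    ext a b
    simp [hes]
  rw [this]

theorem perm_row_swap (A : Matrix (Fin (n+1)) (Fin (n+1)) ℝ) (k i j : Fin (n+1)) (hij : i ≠ j) :
    ((A.updateRow i (A j)).submatrix j.succAbove k.succAbove).permanent
      = (A.submatrix i.succAbove k.succAbove).permanent := by
  set f : Fin n → Fin (n+1) := fun p => Equiv.swap i j (j.succAbove p) with hf
  have hstep : (A.updateRow i (A j)).submatrix j.succAbove k.succAbove
      = A.submatrix f k.succAbove := by
    ext p q
    simp only [Matrix.submatrix_apply, hf]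
    rcases eq_or_ne (j.succAbove p) i with h | h
    · rw [h, Matrix.updateRow_self, Equiv.swap_apply_left]
    · rw [Matrix.updateRow_ne h, Equiv.swap_apply_of_ne_of_ne h (Fin.succAbove_ne j p)]
  have hfinj : Function.Injective f := fun a b hab => by
    have := (Equiv.swap i j).injective hab
    exact Fin.succAbove_right_injective this
  have hginj : Function.Injective i.succAbove := Fin.succAbove_right_injective
  have hrange : Set.range f = Set.range i.succAbove := by
    ext x
    constructor
    · rintro ⟨p, rfl⟩
      have hx : Equiv.swap i j (j.succAbove p) ≠ i := by
        intro h
        have : j.succAbove p = j := by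
          have := congrArg (Equiv.swap i j) h
          simpa [Equiv.swap_apply_left] using this
        exact Fin.succAbove_ne j p this
      obtain ⟨q, hq⟩ := Fin.exists_succAbove_eq (Ne.symm (Ne.symm hx))
      exact ⟨q, hq⟩
    · rintro ⟨p, rfl⟩
      have hx : Equiv.swap i j (i.succAbove p) ≠ j := by
        intro h
        have : i.succAbove p = i := by
          have := congrArg (Equiv.swap i j) h
          simpa [Equiv.swap_apply_right] using this
        exact Fin.succAbove_ne i p this
      obtain ⟨q, hq⟩ := Fin.exists_succAbove_eq hx
      refine ⟨q, ?_⟩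
      have := congrArg (Equiv.swap i j) hq
      simpa [hf] using this
  set τ : Equiv.Perm (Fin n) :=
    (Equiv.ofInjective f hfinj).trans
      ((Equiv.setCongr hrange).trans (Equiv.ofInjective _ hginj).symm) with hτ
  have hτ' : ∀ p, i.succAbove (τ p) = f p := by
    intro p
    simp [hτ, Equiv.apply_ofInjective_symm hginj]
  have : A.submatrix f k.succAbove = (A.submatrix i.succAbove k.succAbove).submatrix τ id := by
    ext p q
    simp [← hτ' p]
  rw [hstep, this, Matrix.permanent_permute_cols]

theorem permanent_contraction_col (n : ℕ) (A : Matrix (Fin (n + 1)) (Fin (n + 1)) ℝ)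
    (k i j : Fin (n + 1)) (hij : i ≠ j)
    (hnonneg : ∀ a b, 0 ≤ A a b)
    (hi : A i k ≠ 0) (hj : A j k ≠ 0)
    (hzero : ∀ l, l ≠ i → l ≠ j → A l k = 0) :
    Matrix.permanent A =
      Matrix.permanent ((A.updateRow i (A j k • A i + A i k • A j)).submatrix
        j.succAbove k.succAbove) := by
  obtain ⟨p₀, hp₀⟩ := Fin.exists_succAbove_eq hij
  have hsub : ∀ v : Fin (n+1) → ℝ,
      (A.updateRow i v).submatrix j.succAbove k.succAbove
        = (A.submatrix j.succAbove k.succAbove).updateRow p₀ (fun q => v (k.succAbove q)) := by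
    intro v
    ext p q
    rcases eq_or_ne p p₀ with rfl | hp
    · simp [hp₀]
    · have : j.succAbove p ≠ i := fun h => hp (Fin.succAbove_right_injective (h.trans hp₀.symm))
      simp [Matrix.updateRow_ne this, Matrix.updateRow_ne hp]
  -- RHS computation
  have hrhs : Matrix.permanent ((A.updateRow i (A j k • A i + A i k • A j)).submatrix
        j.succAbove k.succAbove)
      = A j k * (A.submatrix j.succAbove k.succAbove).permanent
        + A i k * ((A.updateRow i (A j)).submatrix j.succAbove k.succAbove).permanent := by
    rw [hsub]
    have : (fun q => (A j k • A i + A i k • A j) (k.succAbove q))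
        = (A j k • fun q => A i (k.succAbove q)) + (A i k • fun q => A j (k.succAbove q)) := by
      ext q; simp
    rw [this, perm_updateRow_add, Matrix.permanent_updateRow_smul,
      Matrix.permanent_updateRow_smul]
    congr 2
    · have h2 := hsub (A i)
      rw [Matrix.updateRow_eq_self] at h2
      rw [← h2]
    · rw [hsub (A j)]
  rw [hrhs, perm_row_swap A k i j hij, perm_col A k]
  rw [← Finset.add_sum_erase _ _ (Finset.mem_univ i),
    ← Finset.add_sum_erase _ _ (Finset.mem_erase.mpr ⟨Ne.symm hij, Finset.mem_univ j⟩)]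
  rw [Finset.sum_eq_zero (fun l hl => by
    rw [Finset.mem_erase, Finset.mem_erase] at hl
    rw [hzero l hl.2.1 hl.1, zero_mul])]
  ring
end

section
/- Let H_n be as in the paper and define its sequence of contractions on the last column. Then the (n−3)rd contraction of H_n is the 3×3 matrix [[2, −1, 0], [0, 2, 1], [F_{n−2}, F_{n−2} − F_{n−1}, F_{n−1}]], and its permanent equals F_{n+1}. -/
open Finset Nat

theorem permanent_aux (a b : ℤ) :
    Matrix.permanent !![(2 : ℤ), -1, 0; 0, 2, 1; a, a - b, b] = a + 2 * b := by
  have huniv : (Finset.univ : Finset (Equiv.Perm (Fin 3))) =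
      {Equiv.refl _, Equiv.swap 0 1, Equiv.swap 0 2, Equiv.swap 1 2,
        Equiv.swap 0 1 * Equiv.swap 1 2, Equiv.swap 1 2 * Equiv.swap 0 1} := by
    decide
  rw [Matrix.permanent, huniv]
  simp (disch := decide) only [Finset.sum_insert, Finset.mem_insert, Finset.sum_singleton]
  simp (disch := decide) [Fin.prod_univ_succ, Equiv.swap_apply_def, Equiv.Perm.mul_apply]
  ring

theorem permanent_three_by_three_fib (n : ℕ) (hn : 2 ≤ n) :
    Matrix.permanent !![(2 : ℤ), -1, 0; 0, 2, 1;
        (Nat.fib (n - 2) : ℤ), (Nat.fib (n - 2) : ℤ) - (Nat.fib (n - 1) : ℤ),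
        (Nat.fib (n - 1) : ℤ)] =
      (Nat.fib (n + 1) : ℤ) := by
  obtain ⟨m, rfl⟩ := Nat.exists_eq_add_of_le hn
  rw [permanent_aux]
  have h1 : 2 + m - 2 = m := by omega
  have h2 : 2 + m - 1 = m + 1 := by omega
  have h3 : 2 + m + 1 = m + 3 := by omega
  rw [h1, h2, h3]
  have : Nat.fib (m + 3) = Nat.fib m + 2 * Nat.fib (m + 1) := by
    rw [Nat.fib_add_two, Nat.fib_add_two]
    ring
  rw [this]
  push_cast
  ring
end

section
/- If A is an n×n nonnegative matrix contractible on row k (row k has exactly two nonzero entries a_{ki} ≠ 0, a_{kj} ≠ 0 with i ≠ j), then the contraction A_{k:ij} = (A^T_{ij:k})^T satisfies per A = per A_{k:ij}. -/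
open Finset Nat Matrix

variable {R : Type*} [CommSemiring R]

theorem my_permanent_updateCol_add {m : ℕ} (M : Matrix (Fin m) (Fin m) R) (j : Fin m)
    (u v : Fin m → R) :
    permanent (updateCol M j (u + v)) =
      permanent (updateCol M j u) + permanent (updateCol M j v) := by
  simp only [permanent, ← Finset.mul_prod_erase _ _ (Finset.mem_univ j), updateCol_self,
    Pi.add_apply, add_mul, Finset.sum_add_distrib]
  congr 1 <;>
  · refine Finset.sum_congr rfl fun p _ => ?_
    congr 1
    exact Finset.prod_congr rfl fun i hi => by
      rw [updateCol_ne (Finset.ne_of_mem_erase hi),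
        updateCol_ne (Finset.ne_of_mem_erase hi)]

theorem my_permanent_updateRow_add {m : ℕ} (M : Matrix (Fin m) (Fin m) R) (j : Fin m)
    (u v : Fin m → R) :
    permanent (updateRow M j (u + v)) =
      permanent (updateRow M j u) + permanent (updateRow M j v) := by
  rw [← permanent_transpose, ← updateCol_transpose, my_permanent_updateCol_add,
    updateCol_transpose, updateCol_transpose, permanent_transpose, permanent_transpose]

theorem my_permanent_succ_column_zero {n : ℕ} (A : Matrix (Fin (n + 1)) (Fin (n + 1)) R) :
    permanent A = ∑ r : Fin (n + 1), A r 0 * permanent (A.submatrix r.succAbove Fin.succ) := by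
  rw [permanent, Finset.univ_perm_fin_succ, ← Finset.univ_product_univ]
  simp only [Finset.sum_map, Equiv.toEmbedding_apply, Finset.sum_product]
  refine Finset.sum_congr rfl fun r _ => Fin.cases ?_ (fun r => ?_) r
  · simp only [permanent, Fin.prod_univ_succ, Finset.mul_sum,
      Equiv.Perm.decomposeFin_symm_apply_zero, Equiv.Perm.decomposeFin_symm_apply_succ,
      Equiv.swap_self, Equiv.coe_refl, id_eq, Fin.succAbove_zero, submatrix_apply]
  · rw [← permanent_permute_cols r.cycleRange (A.submatrix (Fin.succ r).succAbove Fin.succ),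
      permanent, Finset.mul_sum]
    refine Finset.sum_congr rfl fun σ _ => ?_
    rw [Fin.prod_univ_succ, Equiv.Perm.decomposeFin_symm_apply_zero]
    congr 1
    refine Finset.prod_congr rfl fun c _ => ?_
    simp [Equiv.Perm.decomposeFin_symm_apply_succ, Fin.succAbove_cycleRange]

theorem my_permanent_succ_column {n : ℕ} (A : Matrix (Fin (n + 1)) (Fin (n + 1)) R)
    (c : Fin (n + 1)) :
    permanent A = ∑ r : Fin (n + 1), A r c * permanent (A.submatrix r.succAbove c.succAbove) := by
  rw [← permanent_permute_rows c.cycleRange⁻¹ A, my_permanent_succ_column_zero]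
  refine Finset.sum_congr rfl fun r _ => ?_
  congr 1
  · rw [submatrix_apply, id_eq, Equiv.Perm.inv_def, Fin.cycleRange_symm_zero]
  · congr 1
    ext a b
    simp [Equiv.Perm.inv_def, Fin.cycleRange_symm_succ]

theorem my_permanent_submatrix_range_eq {n : ℕ} (M : Matrix (Fin (n + 1)) (Fin (n + 1)) R)
    (f g : Fin n → Fin (n + 1)) (hf : Function.Injective f) (hg : Function.Injective g)
    (hrange : Set.range f = Set.range g) (c : Fin n → Fin (n + 1)) :
    permanent (M.submatrix f c) = permanent (M.submatrix g c) := by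
  set π : Equiv.Perm (Fin n) :=
    (Equiv.ofInjective f hf).trans ((Equiv.setCongr hrange).trans (Equiv.ofInjective g hg).symm)
  have hπ : ∀ b, g (π b) = f b := by
    intro b
    show g ((Equiv.ofInjective g hg).symm ⟨f b, hrange ▸ Set.mem_range_self b⟩) = f b
    have := (Equiv.ofInjective g hg).apply_symm_apply ⟨f b, hrange ▸ Set.mem_range_self b⟩
    exact congrArg Subtype.val this
  have : M.submatrix f c = (M.submatrix g c).submatrix π id := by
    ext a b; simp [hπ]
  rw [this, permanent_permute_cols]


theorem permanent_contraction_row (n : ℕ) (A : Matrix (Fin (n + 1)) (Fin (n + 1)) ℝ)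
    (k i j : Fin (n + 1)) (hij : i ≠ j)
    (hnonneg : ∀ a b, 0 ≤ A a b)
    (hi : A k i ≠ 0) (hj : A k j ≠ 0)
    (hzero : ∀ l, l ≠ i → l ≠ j → A k l = 0) :
    Matrix.permanent A =
      Matrix.permanent ((((Matrix.updateRow Aᵀ i (Aᵀ j k • Aᵀ i + Aᵀ i k • Aᵀ j)).submatrix
        j.succAbove k.succAbove)ᵀ)) := by
  obtain ⟨b₀, hb₀⟩ := Fin.exists_succAbove_eq (show i ≠ j from hij)
  have hbne : ∀ b, b ≠ b₀ → j.succAbove b ≠ i := by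
    intro b hb h
    exact hb (Fin.succAbove_right_injective (h.trans hb₀.symm))
  rw [permanent_transpose]
  have hM : (Matrix.updateRow Aᵀ i (Aᵀ j k • Aᵀ i + Aᵀ i k • Aᵀ j)).submatrix
      j.succAbove k.succAbove
      = updateRow (Aᵀ.submatrix j.succAbove k.succAbove) b₀
        (Aᵀ j k • (fun a => Aᵀ i (k.succAbove a)) + Aᵀ i k • fun a => Aᵀ j (k.succAbove a)) := by
    ext b a
    by_cases hb : b = b₀
    · subst hb; simp [hb₀]
    · simp [Matrix.updateRow_ne (hbne b hb), Matrix.updateRow_ne hb]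
  rw [hM, my_permanent_updateRow_add, permanent_updateRow_smul, permanent_updateRow_smul]
  have h1 : updateRow (Aᵀ.submatrix j.succAbove k.succAbove) b₀ (fun a => Aᵀ i (k.succAbove a))
      = Aᵀ.submatrix j.succAbove k.succAbove := by
    have h : (fun a => Aᵀ i (k.succAbove a)) = (Aᵀ.submatrix j.succAbove k.succAbove) b₀ := by
      funext a; simp [hb₀]
    rw [h, updateRow_eq_self]
  have h2 : updateRow (Aᵀ.submatrix j.succAbove k.succAbove) b₀ (fun a => Aᵀ j (k.succAbove a))
      = Aᵀ.submatrix (⇑(Equiv.swap i j) ∘ j.succAbove) k.succAbove := by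
    ext b a
    by_cases hb : b = b₀
    · subst hb; simp [hb₀, Equiv.swap_apply_left]
    · have hne' : j.succAbove b ≠ j := Fin.succAbove_ne _ _
      simp [Matrix.updateRow_ne hb, Equiv.swap_apply_of_ne_of_ne (hbne b hb) hne']
  have hrange : Set.range (⇑(Equiv.swap i j) ∘ j.succAbove) = Set.range i.succAbove := by
    rw [Set.range_comp, Fin.range_succAbove, Fin.range_succAbove,
      Set.image_compl_eq (Equiv.swap i j).bijective, Set.image_singleton,
      Equiv.swap_apply_right]
  rw [h1, h2, my_permanent_submatrix_range_eq Aᵀ _ i.succAbove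
    ((Equiv.injective _).comp Fin.succAbove_right_injective) Fin.succAbove_right_injective
    hrange k.succAbove]
  rw [← permanent_transpose A, my_permanent_succ_column Aᵀ k,
    ← Finset.sum_subset (Finset.subset_univ ({i, j} : Finset _)) (fun c _ hc => by
      simp only [Finset.mem_insert, Finset.mem_singleton, not_or] at hc
      rw [transpose_apply, hzero c hc.1 hc.2, zero_mul]),
    Finset.sum_pair hij]
  simp only [transpose_apply]
  ring
end
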